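/- Consider a BD-RIS-assisted MIMO link: let H_d be an N_R×N_T complex matrix (direct channel), f_a ∈ ℂ^{N_R}, f_d ∈ ℂᴹ, g_a ∈ ℂᴹ, g_d ∈ ℂ^{N_T} (pure LoS factors of the backward channel F = f_a·f_dᴴ and forward channel Gᴴ = g_a·g_dᴴ), let R be an N_T×N_T Hermitian positive semidefinite matrix (transmit covariance) with positive semidefinite square root R^{1/2}, and σ > 0. Define A = (1/σ)·H_d·R^{1/2}, f = f_a, g = (1/σ)·R^{1/2}·g_d, γ₁ = fᴴ(I + AAᴴ)⁻¹f, γ₂ = gᴴAᴴ(I + AAᴴ)⁻¹Ag, γ₃ = gᴴAᴴ(I + AAᴴ)⁻¹f, Z = |γ₃|² + γ₁(‖g‖² − γ₂), and α* = ‖f_d‖·‖g_a‖. Then for every M×M complex matrix Θ with Θᵀ = Θ and ΘᴴΘ = I_M, the (real, positive) determinant det(I_{N_R} + (1/σ²)·H·R·Hᴴ) with H = H_d + f_a·(f_dᴴ·Θ·g_a)·g_dᴴ satisfies det(I + (1/σ²)·H·R·Hᴴ) ≤ det(I + A·Aᴴ)·(1 + Z·α*² + 2·α*·|γ₃|). 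-/

import Mathlib

open Matrix
open scoped ComplexOrder

/-- Euclidean norm of a complex vector. -/
noncomputable def euclNorm {m : ℕ} (v : Fin m → ℂ) : ℝ :=
  Real.sqrt (∑ i, Complex.normSq (v i))

private lemma vmv_mul {m n p : ℕ} (u : Fin m → ℂ) (v : Fin n → ℂ)
    (M : Matrix (Fin n) (Fin p) ℂ) :
    vecMulVec u v * M = vecMulVec u (v ᵥ* M) := by
  ext i j
  simp [vecMulVec_apply, mul_apply, vecMul, dotProduct, Finset.mul_sum, mul_assoc]

private lemma mul_vmv {m n p : ℕ} (M : Matrix (Fin m) (Fin n) ℂ)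
    (u : Fin n → ℂ) (v : Fin p → ℂ) :
    M * vecMulVec u v = vecMulVec (M *ᵥ u) v := by
  ext i j
  simp [vecMulVec_apply, mul_apply, mulVec, dotProduct, Finset.sum_mul, mul_assoc]

private lemma vmv_conjT {m n : ℕ} (u : Fin m → ℂ) (v : Fin n → ℂ) :
    (vecMulVec u v)ᴴ = vecMulVec (star v) (star u) := by
  ext i j
  simp [conjTranspose_apply, vecMulVec_apply, mul_comm]

private lemma vmv_smul_right {m n : ℕ} (u : Fin m → ℂ) (r : ℂ) (v : Fin n → ℂ) :
    vecMulVec u (r • v) = r • vecMulVec u v := by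
  ext i j
  simp [vecMulVec_apply, mul_comm, mul_left_comm]

private lemma posDef_one_add_mul_conjTranspose {a b : ℕ}
    (A : Matrix (Fin a) (Fin b) ℂ) : (1 + A * Aᴴ).PosDef :=
  Matrix.PosDef.add_posSemidef Matrix.PosDef.one (posSemidef_self_mul_conjTranspose A)

private lemma posDef_one_add_conjTranspose_mul {a b : ℕ}
    (A : Matrix (Fin a) (Fin b) ℂ) : (1 + Aᴴ * A).PosDef :=
  Matrix.PosDef.add_posSemidef Matrix.PosDef.one (posSemidef_conjTranspose_mul_self A)

private lemma pushthrough {a b : ℕ} (A : Matrix (Fin a) (Fin b) ℂ) :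
    Aᴴ * (1 + A * Aᴴ)⁻¹ * A = 1 - (1 + Aᴴ * A)⁻¹ := by
  set K := 1 + A * Aᴴ with hK
  set L := 1 + Aᴴ * A with hL
  have hKd : IsUnit K.det := (posDef_one_add_mul_conjTranspose A).isUnit.map detMonoidHom
  have hLd : IsUnit L.det := (posDef_one_add_conjTranspose_mul A).isUnit.map detMonoidHom
  have hcomm : Aᴴ * K = L * Aᴴ := by
    rw [hK, hL, Matrix.mul_add, Matrix.add_mul, Matrix.mul_one, Matrix.one_mul,
      Matrix.mul_assoc]
  have hinv : Aᴴ * K⁻¹ = L⁻¹ * Aᴴ := by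
    calc Aᴴ * K⁻¹ = (L⁻¹ * L) * (Aᴴ * K⁻¹) := by
          rw [Matrix.nonsing_inv_mul _ hLd, Matrix.one_mul]
      _ = L⁻¹ * ((L * Aᴴ) * K⁻¹) := by
          rw [Matrix.mul_assoc, Matrix.mul_assoc]
      _ = L⁻¹ * (Aᴴ * (K * K⁻¹)) := by rw [← hcomm, Matrix.mul_assoc]
      _ = L⁻¹ * Aᴴ := by rw [Matrix.mul_nonsing_inv _ hKd, Matrix.mul_one]
  rw [hinv, Matrix.mul_assoc]
  have hAA : Aᴴ * A = L - 1 := by rw [hL]; abel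
  rw [hAA, Matrix.mul_sub, Matrix.mul_one, Matrix.nonsing_inv_mul _ hLd]

set_option maxHeartbeats 2000000 in
/-- Upper bound on the achievable rate of a BD-RIS-assisted MIMO link with
pure LoS channels through the BD-RIS: for every symmetric unitary `Θ`,
`det(I + σ⁻²HRHᴴ) ≤ det(I + AAᴴ)(1 + Z α*² + 2α*|γ₃|)` with
`H = H_d + (f_dᴴ Θ g_a) f_a g_dᴴ` and `α* = ‖f_d‖‖g_a‖`. -/
theorem BD_RIS_rate_upper_bound
    {NR NT M : ℕ}
    (Hd : Matrix (Fin NR) (Fin NT) ℂ)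
    (fa : Fin NR → ℂ) (fd : Fin M → ℂ) (ga : Fin M → ℂ) (gd : Fin NT → ℂ)
    (R : Matrix (Fin NT) (Fin NT) ℂ) (hR : R.PosSemidef)
    (S : Matrix (Fin NT) (Fin NT) ℂ) (hS : S.PosSemidef) (hSS : S * S = R)
    (σ : ℝ) (hσ : 0 < σ)
    (A : Matrix (Fin NR) (Fin NT) ℂ) (hA : A = ((σ : ℂ))⁻¹ • (Hd * S))
    (f : Fin NR → ℂ) (hf : f = fa)
    (g : Fin NT → ℂ) (hg : g = ((σ : ℂ))⁻¹ • (S *ᵥ gd))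
    (γ₁ γ₂ γ₃ : ℂ)
    (hγ₁ : γ₁ = star f ⬝ᵥ ((1 + A * Aᴴ)⁻¹ *ᵥ f))
    (hγ₂ : γ₂ = star g ⬝ᵥ ((Aᴴ * (1 + A * Aᴴ)⁻¹ * A) *ᵥ g))
    (hγ₃ : γ₃ = star g ⬝ᵥ ((Aᴴ * (1 + A * Aᴴ)⁻¹) *ᵥ f))
    (Z : ℝ)
    (hZ : Z = (‖γ₃‖) ^ 2 + γ₁.re * ((euclNorm g) ^ 2 - γ₂.re))
    (αs : ℝ) (hαs : αs = euclNorm fd * euclNorm ga) :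
    ∀ Θ : Matrix (Fin M) (Fin M) ℂ, Θᵀ = Θ → Θᴴ * Θ = 1 →
      ∀ H : Matrix (Fin NR) (Fin NT) ℂ,
        H = Hd + (star fd ⬝ᵥ (Θ *ᵥ ga)) • vecMulVec fa (star gd) →
        (1 + (((σ : ℂ)) ^ 2)⁻¹ • (H * R * Hᴴ)).det
          ≤ (1 + A * Aᴴ).det
            * (1 + ((Z : ℝ) : ℂ) * ((αs : ℝ) : ℂ) ^ 2
                + 2 * ((αs : ℝ) : ℂ) * ((‖γ₃‖ : ℝ) : ℂ)) := by
  intro Θ hΘt hΘu H hH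
  have hSH : Sᴴ = S := hS.1
  set α : ℂ := star fd ⬝ᵥ (Θ *ᵥ ga) with hαdef
  set K : Matrix (Fin NR) (Fin NR) ℂ := 1 + A * Aᴴ with hKdef
  set N : Matrix (Fin NR) (Fin NR) ℂ := K⁻¹ with hNdef
  have hKpd : K.PosDef := posDef_one_add_mul_conjTranspose A
  have hNpd : N.PosDef := hKpd.inv
  have hNH : Nᴴ = N := hNpd.isHermitian
  have hKd : IsUnit K.det := hKpd.isUnit.map detMonoidHom
  set p : Fin NR → ℂ := A *ᵥ g with hpdef
  set c : ℂ := star g ⬝ᵥ g with hcdef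
  -- Step 1: the equivalent channel matrix
  have hstarg : star g = (σ:ℂ)⁻¹ • star (S *ᵥ gd) := by
    rw [hg, star_smul]
    congr 1
    simp [Complex.star_def, map_inv₀, Complex.conj_ofReal]
  set B : Matrix (Fin NR) (Fin NT) ℂ := A + α • vecMulVec f (star g) with hBdef
  have hSg : star (S *ᵥ gd) = star gd ᵥ* S := by rw [star_mulVec, hSH]
  have hBS : ((σ:ℂ))⁻¹ • (H * S) = B := by
    rw [hBdef, hH, hA, hf, hstarg, hSg, vmv_smul_right, Matrix.add_mul,
      Matrix.smul_mul, vmv_mul, smul_add]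
    congr 1
    rw [smul_comm]
  have hscale : (((σ:ℂ))^2)⁻¹ • (H * R * Hᴴ) = B * Bᴴ := by
    rw [← hBS, Matrix.conjTranspose_smul, Matrix.smul_mul, Matrix.mul_smul,
      smul_smul, Matrix.conjTranspose_mul, hSH]
    have h1 : H * S * (S * Hᴴ) = H * R * Hᴴ := by
      rw [← hSS, ← Matrix.mul_assoc, Matrix.mul_assoc H S S]
    rw [h1]
    congr 1
    simp only [Complex.star_def, map_inv₀, Complex.conj_ofReal]
    rw [sq, mul_inv]
  -- Step 2: rank-two decomposition of B * Bᴴ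
  have hWW : vecMulVec f (star g) * vecMulVec g (star f) = c • vecMulVec f (star f) := by
    rw [hcdef]
    ext i j
    simp only [mul_apply, vecMulVec_apply, Matrix.smul_apply, smul_eq_mul, dotProduct,
      Finset.sum_mul, Pi.star_apply]
    exact Finset.sum_congr rfl fun k _ => by ring
  have hgA : star g ᵥ* Aᴴ = star p := by rw [hpdef, star_mulVec]
  have hBBd : B * Bᴴ = A * Aᴴ + (α • vecMulVec f (star p) +
      (star α • vecMulVec p (star f) + ((α * star α) * c) • vecMulVec f (star f))) := by
    rw [hBdef, Matrix.conjTranspose_add, Matrix.conjTranspose_smul, vmv_conjT, star_star,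
      Matrix.add_mul, Matrix.mul_add, Matrix.mul_add, Matrix.mul_smul, mul_vmv, ← hpdef,
      Matrix.smul_mul, vmv_mul, hgA, Matrix.mul_smul, Matrix.smul_mul, hWW,
      smul_smul, smul_smul]
    have hsc : star α * α * c = α * star α * c := by ring
    rw [hsc]
    abel
  set U : Matrix (Fin NR) (Fin 2) ℂ :=
    Matrix.of fun i j => if j = 0 then α * f i
      else star α * p i + ((α * star α) * c) * f i with hUdef
  set V : Matrix (Fin NR) (Fin 2) ℂ :=
    Matrix.of fun i j => if j = 0 then p i else f i with hVdef
  have hUV : U * Vᴴ = α • vecMulVec f (star p) + (star α • vecMulVec p (star f)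
      + ((α * star α) * c) • vecMulVec f (star f)) := by
    ext i j
    simp only [mul_apply, Fin.sum_univ_two, conjTranspose_apply, hUdef, hVdef, Matrix.of_apply,
      Matrix.add_apply, Matrix.smul_apply, vecMulVec_apply, smul_eq_mul, Pi.star_apply,
      if_true, one_ne_zero, if_false, Fin.isValue, reduceIte]
    ring
  have hdetsplit : (1 + B * Bᴴ).det = K.det * (1 + Vᴴ * (N * U)).det := by
    have h1 : (1 : Matrix (Fin NR) (Fin NR) ℂ) + B * Bᴴ = K + U * Vᴴ := by
      rw [hBBd, ← hUV, ← add_assoc, hKdef]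
    have h2 : K + U * Vᴴ = K * (1 + N * U * Vᴴ) := by
      rw [Matrix.mul_add, Matrix.mul_one]
      congr 1
      rw [← Matrix.mul_assoc K (N * U) Vᴴ, ← Matrix.mul_assoc K N U, hNdef,
        Matrix.mul_nonsing_inv _ hKd, Matrix.one_mul]
    rw [h1, h2, det_mul]
    congr 1
    exact Matrix.det_one_add_mul_comm (N * U) Vᴴ
  -- γ's in terms of p and N
  have hγ₃p : γ₃ = star p ⬝ᵥ (N *ᵥ f) := by
    rw [hγ₃, ← Matrix.mulVec_mulVec, Matrix.dotProduct_mulVec, ← Matrix.star_mulVec, ← hpdef]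
  have hγ₂p : γ₂ = star p ⬝ᵥ (N *ᵥ p) := by
    rw [hγ₂, ← Matrix.mulVec_mulVec, ← Matrix.mulVec_mulVec, Matrix.dotProduct_mulVec,
      ← Matrix.star_mulVec, ← hpdef]
  have hγ₃s : star f ⬝ᵥ (N *ᵥ p) = star γ₃ := by
    rw [star_dotProduct, star_mulVec, hNH, ← Matrix.dotProduct_mulVec, ← hγ₃p]
  -- entries of the 2×2 matrix
  have hentry : ∀ i j, (Vᴴ * (N * U)) i j
      = star (fun k => V k i) ⬝ᵥ (N *ᵥ fun l => U l j) := by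
    intro i j
    rfl
  have hU0 : (fun l => U l 0) = α • f := by funext l; simp [hUdef]
  have hU1 : (fun l => U l 1) = star α • p + ((α * star α) * c) • f := by
    funext l; simp [hUdef]
  have hV0 : (fun k => V k 0) = p := by funext k; simp [hVdef]
  have hV1 : (fun k => V k 1) = f := by funext k; simp [hVdef]
  have e00 : (Vᴴ * (N * U)) 0 0 = α * γ₃ := by
    rw [hentry, hU0, hV0, mulVec_smul, dotProduct_smul, hγ₃p, smul_eq_mul]
  have e01 : (Vᴴ * (N * U)) 0 1 = star α * γ₂ + ((α * star α) * c) * γ₃ := by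
    rw [hentry, hU1, hV0, mulVec_add, dotProduct_add, mulVec_smul, dotProduct_smul,
      mulVec_smul, dotProduct_smul, hγ₂p, hγ₃p, smul_eq_mul, smul_eq_mul]
  have e10 : (Vᴴ * (N * U)) 1 0 = α * γ₁ := by
    rw [hentry, hU0, hV1, mulVec_smul, dotProduct_smul, ← hγ₁, smul_eq_mul]
  have e11 : (Vᴴ * (N * U)) 1 1 = star α * star γ₃ + ((α * star α) * c) * γ₁ := by
    rw [hentry, hU1, hV1, mulVec_add, dotProduct_add, mulVec_smul, dotProduct_smul,
      mulVec_smul, dotProduct_smul, hγ₃s, ← hγ₁, smul_eq_mul, smul_eq_mul]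
  have hdet2 : (1 + Vᴴ * (N * U)).det =
      (1 + α * γ₃) * (1 + (star α * star γ₃ + ((α * star α) * c) * γ₁))
        - (star α * γ₂ + ((α * star α) * c) * γ₃) * (α * γ₁) := by
    rw [Matrix.det_fin_two]
    simp [Matrix.add_apply, Matrix.one_apply, e00, e01, e10, e11]
  -- positivity and realness
  have hγ₁nonneg : (0:ℂ) ≤ γ₁ := by rw [hγ₁]; exact hNpd.posSemidef.dotProduct_mulVec_nonneg f
  set L : Matrix (Fin NT) (Fin NT) ℂ := 1 + Aᴴ * A with hLdef
  have hLpd : L.PosDef := posDef_one_add_conjTranspose_mul A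
  set δ : ℂ := star g ⬝ᵥ (L⁻¹ *ᵥ g) with hδdef
  have hδnonneg : (0:ℂ) ≤ δ := hLpd.inv.posSemidef.dotProduct_mulVec_nonneg g
  have hγ₂cδ : γ₂ = c - δ := by
    have hpt : Aᴴ * N * A = 1 - L⁻¹ := by
      rw [hNdef, hKdef, hLdef]; exact pushthrough A
    rw [hγ₂, hpt, Matrix.sub_mulVec, dotProduct_sub, Matrix.one_mulVec, ← hcdef, ← hδdef]
  have hγ₁re : γ₁ = ((γ₁.re : ℝ) : ℂ) :=
    Complex.eq_re_of_ofReal_le (r := 0) (by simpa using hγ₁nonneg)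
  have hδre : δ = ((δ.re : ℝ) : ℂ) :=
    Complex.eq_re_of_ofReal_le (r := 0) (by simpa using hδnonneg)
  have hγ₁renn : 0 ≤ γ₁.re := (Complex.nonneg_iff.mp hγ₁nonneg).1
  have hδrenn : 0 ≤ δ.re := (Complex.nonneg_iff.mp hδnonneg).1
  -- value of the 2×2 determinant
  have hdetval1 : (1 + Vᴴ * (N * U)).det
      = (1 + α * γ₃) * star (1 + α * γ₃)
        + (α * star α) * (((γ₁.re : ℝ) : ℂ) * ((δ.re : ℝ) : ℂ)) := by
    rw [hdet2, hγ₂cδ]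
    have h1 : star (1 + α * γ₃) = 1 + star α * star γ₃ := by
      simp [star_add, star_mul']
    rw [h1, hγ₁re, hδre]
    ring_nf
    simp [Complex.ofReal_re]
  have hmulconj1 : (1 + α * γ₃) * star (1 + α * γ₃)
      = ((Complex.normSq (1 + α * γ₃) : ℝ) : ℂ) := by
    rw [Complex.star_def, Complex.mul_conj]
  have hmulconj2 : α * star α = ((Complex.normSq α : ℝ) : ℂ) := by
    rw [Complex.star_def, Complex.mul_conj]
  have hdetval : (1 + Vᴴ * (N * U)).det
      = ((Complex.normSq (1 + α * γ₃) + Complex.normSq α * (γ₁.re * δ.re) : ℝ) : ℂ) := by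
    rw [hdetval1, hmulconj1, hmulconj2]
    push_cast
    ring
  -- real sums
  have hsum : ∀ {m : ℕ} (v : Fin m → ℂ),
      star v ⬝ᵥ v = ((∑ i, Complex.normSq (v i) : ℝ) : ℂ) := by
    intro m v
    simp only [dotProduct, Pi.star_apply, Complex.star_def]
    push_cast
    exact Finset.sum_congr rfl fun i _ => by rw [mul_comm, Complex.mul_conj]
  have hcre : c.re = (euclNorm g) ^ 2 := by
    have h1 : c = ((∑ i, Complex.normSq (g i) : ℝ) : ℂ) := by rw [hcdef]; exact hsum g
    have h2 : (0:ℝ) ≤ ∑ i, Complex.normSq (g i) :=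
      Finset.sum_nonneg fun i _ => Complex.normSq_nonneg _
    rw [h1, Complex.ofReal_re]
    unfold euclNorm
    rw [Real.sq_sqrt h2]
  -- Cauchy–Schwarz bound on |α|
  have hαbound : ‖α‖ ≤ αs := by
    have hxnorm : ∀ {m : ℕ} (v : Fin m → ℂ),
        ‖(WithLp.equiv 2 (Fin m → ℂ)).symm v‖ = euclNorm v := by
      intro m v
      rw [EuclideanSpace.norm_eq]
      unfold euclNorm
      congr 1
      exact Finset.sum_congr rfl fun i _ => by
        rw [Complex.sq_norm]; rfl
    have hnorm : euclNorm (Θ *ᵥ ga) = euclNorm ga := by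
      have hdp : star (Θ *ᵥ ga) ⬝ᵥ (Θ *ᵥ ga) = star ga ⬝ᵥ ga := by
        rw [star_mulVec, Matrix.dotProduct_mulVec, Matrix.vecMul_vecMul, hΘu,
          Matrix.vecMul_one]
      have h1 := (hsum (Θ *ᵥ ga)).symm.trans ((hsum ga).symm ▸ hdp)
      have h2 : (∑ i, Complex.normSq ((Θ *ᵥ ga) i)) = ∑ i, Complex.normSq (ga i) :=
        Complex.ofReal_injective h1
      unfold euclNorm
      rw [h2]
    have hi : (inner ℂ ((WithLp.equiv 2 (Fin M → ℂ)).symm fd)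
        ((WithLp.equiv 2 (Fin M → ℂ)).symm (Θ *ᵥ ga)) : ℂ) = α := by
      rw [hαdef]
      simp [PiLp.inner_apply, RCLike.inner_apply, dotProduct,
        WithLp.equiv_symm_apply, WithLp.ofLp_toLp, Complex.star_def, mul_comm]
    have key := norm_inner_le_norm (𝕜 := ℂ) ((WithLp.equiv 2 (Fin M → ℂ)).symm fd)
      ((WithLp.equiv 2 (Fin M → ℂ)).symm (Θ *ᵥ ga))
    rw [hi, hxnorm, hxnorm, hnorm] at key
    rw [hαs]
    exact key
  have ha3 : 0 ≤ ‖γ₃‖ := norm_nonneg _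
  have hαsnn : 0 ≤ αs := le_trans (norm_nonneg α) hαbound
  have hn1 : Complex.normSq (1 + α * γ₃) ≤ (1 + αs * ‖γ₃‖) ^ 2 := by
    rw [← Complex.sq_norm]
    have h1 : ‖1 + α * γ₃‖ ≤ 1 + αs * ‖γ₃‖ := by
      calc ‖1 + α * γ₃‖ ≤ ‖(1:ℂ)‖ + ‖α * γ₃‖ :=
            norm_add_le _ _
        _ = 1 + ‖α‖ * ‖γ₃‖ := by rw [norm_one, norm_mul]
        _ ≤ 1 + αs * ‖γ₃‖ := by
            exact add_le_add_right (mul_le_mul_of_nonneg_right hαbound ha3) 1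
    exact pow_le_pow_left₀ (norm_nonneg _) h1 2
  have hn2 : Complex.normSq α ≤ αs ^ 2 := by
    rw [← Complex.sq_norm]
    exact pow_le_pow_left₀ (norm_nonneg _) hαbound 2
  have hg1d : 0 ≤ γ₁.re * δ.re := mul_nonneg hγ₁renn hδrenn
  -- K determinant
  have hdKpos : (0:ℂ) < K.det := hKpd.det_pos
  have hdK : K.det = ((K.det.re : ℝ) : ℂ) :=
    Complex.eq_re_of_ofReal_le (r := 0) (by simpa using hdKpos.le)
  have hdKnonneg : 0 ≤ K.det.re := (Complex.nonneg_iff.mp hdKpos.le).1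
  -- Z
  have hZval : Z = ‖γ₃‖ ^ 2 + γ₁.re * δ.re := by
    rw [hZ]
    congr 2
    have : γ₂.re = c.re - δ.re := by rw [hγ₂cδ, Complex.sub_re]
    rw [this, hcre]
    ring
  -- final assembly
  rw [hscale, hdetsplit, hdetval, hdK]
  have hrhs : (1 + ((Z:ℝ):ℂ) * ((αs:ℝ):ℂ) ^ 2 + 2 * ((αs:ℝ):ℂ) * ((‖γ₃‖ : ℝ):ℂ))
      = ((1 + Z * αs ^ 2 + 2 * αs * ‖γ₃‖ : ℝ) : ℂ) := by
    push_cast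
    ring
  rw [hrhs, ← Complex.ofReal_mul, ← Complex.ofReal_mul, Complex.real_le_real]
  apply mul_le_mul_of_nonneg_left _ hdKnonneg
  rw [hZval]
  nlinarith [hn1, hn2, hg1d, ha3, hαsnn, mul_nonneg (sub_nonneg.mpr hn2) hg1d]
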